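/- arXiv:1310.1181 — 3 statements merged into one kernel-verified Lean document; each statement's English description precedes it below -/
import Mathlib

section
/- Let B be a standard one-dimensional Brownian motion with first hitting time T_1, U uniform on [0,1] independent of B, and α = B_{U T_1}/√T_1. Then for every ε with 0 < ε < 1/2, E[exp(ε (α^+)²)] < ∞, where α^+ = max(α, 0). -/
open MeasureTheory ProbabilityTheory Filter Set
open scoped ENNReal

/-- Real power with the convention `0 ^ 0 = 0`. -/
noncomputable def rpow₀ (x m : ℝ) : ℝ := if x = 0 then 0 else x ^ m

/-- `B` is a standard one-dimensional Brownian motion under `P`: almost surely continuous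
paths, `B 0 = 0`, independent increments, and `B t - B s` Gaussian with mean `0` and
variance `t - s` for `0 ≤ s ≤ t`. -/
structure IsBrownianMotion {Ω : Type*} [MeasurableSpace Ω] (P : Measure Ω)
    (B : ℝ → Ω → ℝ) : Prop where
  isProb : IsProbabilityMeasure P
  meas : ∀ t : ℝ, Measurable (B t)
  init : ∀ᵐ ω ∂P, B 0 ω = 0
  cont : ∀ᵐ ω ∂P, Continuous fun t => B t ω
  indep : ∀ (n : ℕ) (t : ℕ → ℝ), Monotone t → (∀ i, 0 ≤ t i) →
      iIndepFun
        (fun i : Fin n => fun ω => B (t (i + 1)) ω - B (t i) ω) P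
  gauss : ∀ s t : ℝ, 0 ≤ s → s ≤ t →
      P.map (fun ω => B t ω - B s ω) = gaussianReal 0 (Real.toNNReal (t - s))

/-- First hitting time of level `a` by `B`. -/
noncomputable def hitTime {Ω : Type*} (B : ℝ → Ω → ℝ) (a : ℝ) (ω : Ω) : ℝ :=
  sInf {t : ℝ | 0 ≤ t ∧ B t ω = a}

open Real
open scoped NNReal

lemma pdf_shift (m : ℝ) (v : ℝ≥0) (hv : v ≠ 0) (c x : ℝ) :
    rexp (c * x) * gaussianPDFReal m v x
      = rexp (c * m + c^2 * v / 2) * gaussianPDFReal (m + c * v) v x := by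
  unfold gaussianPDFReal
  rw [mul_left_comm, mul_left_comm (rexp (c * m + c ^ 2 * ↑v / 2)),
    ← Real.exp_add, ← Real.exp_add]
  congr 2
  have hv' : (v:ℝ) ≠ 0 := by exact_mod_cast hv
  field_simp
  ring

lemma integral_exp_gaussianReal (m : ℝ) (v : ℝ≥0) (c : ℝ) :
    ∫ x, rexp (c * x) ∂(gaussianReal m v) = rexp (c * m + c^2 * v / 2) := by
  by_cases hv : v = 0
  · simp [hv, gaussianReal_zero_var]
  · rw [gaussianReal_of_var_ne_zero _ hv, gaussianPDF_def]
    simp_rw [ENNReal.ofReal]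
    rw [integral_withDensity_eq_integral_smul (measurable_gaussianPDFReal m v).real_toNNReal]
    have : ∀ x : ℝ, (gaussianPDFReal m v x).toNNReal • rexp (c * x)
        = rexp (c * m + c^2 * v / 2) * gaussianPDFReal (m + c * v) v x := by
      intro x
      rw [NNReal.smul_def, smul_eq_mul, Real.coe_toNNReal _ (gaussianPDFReal_nonneg m v x),
        mul_comm, pdf_shift m v hv]
    simp_rw [this]
    rw [integral_const_mul, integral_gaussianPDFReal_eq_one _ hv, mul_one]

lemma integrable_exp_gaussianReal (m : ℝ) (v : ℝ≥0) (c : ℝ) :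
    Integrable (fun x => rexp (c * x)) (gaussianReal m v) := by
  by_cases hv : v = 0
  · rw [hv, gaussianReal_zero_var]
    exact (integrable_const (rexp (c * m))).congr (ae_eq_dirac fun x => rexp (c*x)).symm
  · rw [gaussianReal_of_var_ne_zero _ hv, gaussianPDF_def]
    simp_rw [ENNReal.ofReal]
    rw [integrable_withDensity_iff_integrable_smul (measurable_gaussianPDFReal m v).real_toNNReal]
    have : (fun x : ℝ => (gaussianPDFReal m v x).toNNReal • rexp (c * x))
        = fun x => rexp (c * m + c^2 * v / 2) * gaussianPDFReal (m + c * v) v x := by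
      funext x
      rw [NNReal.smul_def, smul_eq_mul, Real.coe_toNNReal _ (gaussianPDFReal_nonneg m v x),
        mul_comm, pdf_shift m v hv]
    rw [this]
    exact (integrable_gaussianPDFReal _ _).const_mul _

section BM
variable {Ω : Type*} [MeasurableSpace Ω] {P : Measure Ω} {B : ℝ → Ω → ℝ}

lemma IsBrownianMotion.integrable_exp_incr (hB : IsBrownianMotion P B) {s t : ℝ}
    (hs : 0 ≤ s) (hst : s ≤ t) (c : ℝ) :
    Integrable (fun ω => rexp (c * (B t ω - B s ω))) P := by
  have hmeas : Measurable (fun ω => B t ω - B s ω) := (hB.meas t).sub (hB.meas s)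
  have hsm : AEStronglyMeasurable (fun x : ℝ => rexp (c * x))
      (P.map (fun ω => B t ω - B s ω)) :=
    ((measurable_const.mul measurable_id).exp).aestronglyMeasurable
  have hint := integrable_exp_gaussianReal 0 (Real.toNNReal (t - s)) c
  rw [← hB.gauss s t hs hst] at hint
  exact (integrable_map_measure hsm hmeas.aemeasurable).mp hint

lemma IsBrownianMotion.integral_exp_incr (hB : IsBrownianMotion P B) {s t : ℝ}
    (hs : 0 ≤ s) (hst : s ≤ t) (c : ℝ) :
    ∫ ω, rexp (c * (B t ω - B s ω)) ∂P = rexp (c^2 * (t - s) / 2) := by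
  have hmeas : Measurable (fun ω => B t ω - B s ω) := (hB.meas t).sub (hB.meas s)
  have hsm : AEStronglyMeasurable (fun x : ℝ => rexp (c * x))
      (P.map (fun ω => B t ω - B s ω)) :=
    ((measurable_const.mul measurable_id).exp).aestronglyMeasurable
  have h := integral_map hmeas.aemeasurable (f := fun x => rexp (c * x)) hsm
  rw [hB.gauss s t hs hst, integral_exp_gaussianReal] at h
  rw [← h, Real.coe_toNNReal _ (by linarith)]
  ring_nf

lemma doob_grid (hB : IsBrownianMotion P B) (n : ℕ) (u : ℕ → ℝ) (hu : Monotone u)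
    (h0 : u 0 = 0) (t a lam : ℝ) (ht : ∀ j, j ≤ n → u j ≤ t) (ha : 0 < a) (hl : 0 < lam) :
    P {ω | ∃ j, 1 ≤ j ∧ j ≤ n ∧ a ≤ B (u j) ω}
      ≤ ENNReal.ofReal (rexp (-(lam*a) + lam^2*t/2)) := by
  haveI := hB.isProb
  rcases Nat.eq_zero_or_pos n with hn | hn
  · subst hn
    have he : {ω | ∃ j, 1 ≤ j ∧ j ≤ 0 ∧ a ≤ B (u j) ω} = (∅ : Set Ω) := by
      ext ω
      constructor
      · rintro ⟨j, h1, h2, _⟩; omega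
      · intro h; exact h.elim
    rw [he, measure_empty]
    positivity
  have hupos : ∀ j, 0 ≤ u j := fun j => h0 ▸ hu (Nat.zero_le j)
  set G : ℕ → Ω → ℝ := fun i ω => B (u (i+1)) ω - B (u 0) ω with hGdef
  have hGmeas : ∀ i, Measurable (G i) := fun i => (hB.meas _).sub (hB.meas _)
  set C : ℕ → Set Ω := fun i =>
    {ω | a ≤ G i ω} ∩ ⋂ j ∈ Finset.range i, {ω | G j ω < a} with hCdef
  have hCmeas : ∀ i, MeasurableSet (C i) := by
    intro i
    exact (measurableSet_le measurable_const (hGmeas i)).inter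
      (MeasurableSet.biInter (Finset.range i).countable_toSet
        (fun j _ => measurableSet_lt (hGmeas j) measurable_const))
  have hCmem : ∀ i ω, ω ∈ C i ↔ (a ≤ G i ω ∧ ∀ j < i, G j ω < a) := by
    intro i ω
    simp [hCdef, Set.mem_iInter]
  -- union identity
  have hunion : (⋃ i ∈ Finset.range n, C i) = {ω | ∃ i, i < n ∧ a ≤ G i ω} := by
    ext ω
    simp only [Set.mem_iUnion, Finset.mem_range, Set.mem_setOf_eq]
    constructor
    · rintro ⟨i, hi, hmem⟩
      exact ⟨i, hi, ((hCmem i ω).mp hmem).1⟩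
    · rintro ⟨i, hi, hai⟩
      have hex : ∃ k, a ≤ G k ω := ⟨i, hai⟩
      refine ⟨Nat.find hex, lt_of_le_of_lt (Nat.find_le hai) hi, ?_⟩
      rw [hCmem]
      exact ⟨Nat.find_spec hex, fun j hj => lt_of_not_ge (Nat.find_min hex hj)⟩
  -- pairwise disjoint
  have hdisj0 : ∀ {i j : ℕ}, i < j → Disjoint (C i) (C j) := by
    intro i j hlt
    rw [Set.disjoint_left]
    intro ω hi hj
    exact absurd ((hCmem i ω).mp hi).1 (not_le.mpr (((hCmem j ω).mp hj).2 i hlt))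
  have hdisj : (↑(Finset.range n) : Set ℕ).PairwiseDisjoint C := by
    intro i _ j _ hij
    rcases lt_or_gt_of_ne hij with hlt | hlt
    · exact hdisj0 hlt
    · exact (hdisj0 hlt).symm
  -- increments
  classical
  set Y : Fin n → Ω → ℝ := fun j ω => B (u ((j:ℕ)+1)) ω - B (u (j:ℕ)) ω with hYdef
  have hYind : iIndepFun Y P := hB.indep n u hu hupos
  have hGn_int : Integrable (fun ω => rexp (lam * G (n-1) ω)) P :=
    hB.integrable_exp_incr (hupos 0) (hu (Nat.zero_le _)) lam
  -- the key estimate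
  have key : ∀ i, i < n →
      rexp (lam * a) * (P (C i)).toReal ≤ ∫ ω in C i, rexp (lam * G (n-1) ω) ∂P := by
    intro i hi
    have hGi_int : Integrable (fun ω => rexp (lam * G i ω)) P :=
      hB.integrable_exp_incr (hupos 0) (hu (Nat.zero_le _)) lam
    have hstep1 : rexp (lam * a) * (P (C i)).toReal ≤ ∫ ω in C i, rexp (lam * G i ω) ∂P := by
      have h1 : ∫ _ω in C i, rexp (lam * a) ∂P = (P (C i)).toReal * rexp (lam * a) := by
        rw [setIntegral_const, smul_eq_mul]; rfl
      rw [mul_comm, ← h1]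
      refine setIntegral_mono_on (integrableOn_const (measure_ne_top P _))
        hGi_int.integrableOn (hCmeas i) ?_
      intro ω hω
      exact Real.exp_le_exp.2 (mul_le_mul_of_nonneg_left ((hCmem i ω).mp hω).1 hl.le)
    set Δ : Ω → ℝ := fun ω => rexp (lam * (B (u n) ω - B (u (i+1)) ω)) with hΔdef
    have hin : i + 1 ≤ n := hi
    have hΔint : Integrable Δ P := hB.integrable_exp_incr (hupos (i+1)) (hu hin) lam
    have hΔ1 : 1 ≤ ∫ ω, Δ ω ∂P := by
      rw [hB.integral_exp_incr (hupos (i+1)) (hu hin) lam]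
      refine Real.one_le_exp ?_
      have hmono : u (i+1) ≤ u n := hu hin
      have : (0:ℝ) ≤ lam^2 := sq_nonneg lam
      nlinarith
    set I : Ω → ℝ := (C i).indicator (fun ω => rexp (lam * G i ω)) with hIdef
    have hIint : Integrable I P := hGi_int.indicator (hCmeas i)
    have hInonneg : 0 ≤ ∫ ω, I ω ∂P :=
      integral_nonneg (fun ω => Set.indicator_nonneg (fun ω' _ => (Real.exp_pos _).le) ω)
    -- independence of I and Δ
    have hIndep : IndepFun I Δ P := by
      set S : Finset (Fin n) := Finset.univ.filter (fun j => (j:ℕ) ≤ i) with hSdef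
      set T : Finset (Fin n) := Finset.univ.filter (fun j => i < (j:ℕ)) with hTdef
      have hST : Disjoint S T := by
        rw [Finset.disjoint_left]
        intro j hjS hjT
        simp only [hSdef, hTdef, Finset.mem_filter, Finset.mem_univ, true_and] at hjS hjT
        omega
      have hbase := hYind.indepFun_finset S T hST
        (fun j => (hB.meas _).sub (hB.meas _))
      -- partial sums function
      set ps : ℕ → (S → ℝ) → ℝ :=
        fun k y => ∑ j ∈ S.attach, if ((j:Fin n):ℕ) ≤ k then y j else 0 with hpsdef
      have hpsm : ∀ k, Measurable (ps k) := by
        intro k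
        apply Finset.measurable_sum
        intro j _
        by_cases hj : ((j:Fin n):ℕ) ≤ k
        · simpa only [if_pos hj] using measurable_pi_apply j
        · simpa only [if_neg hj] using (measurable_const : Measurable fun _ : (S → ℝ) => (0:ℝ))
      -- sum over S with cutoff k
      have hchain : ∀ k, k ≤ i → ∀ ω,
          (∑ j ∈ S, if (j:ℕ) ≤ k then Y j ω else 0) = G k ω := by
        intro k hk ω
        have h1 : (∑ j ∈ S, if (j:ℕ) ≤ k then Y j ω else 0)
            = ∑ j : Fin n, (if (j:ℕ) ≤ k then Y j ω else 0) := by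
          refine Finset.sum_subset (Finset.subset_univ S) ?_
          intro j _ hjS
          simp only [hSdef, Finset.mem_filter, Finset.mem_univ, true_and] at hjS
          have : ¬ ((j:ℕ) ≤ k) := by omega
          simp [this]
        have h2 : (∑ j : Fin n, (if (j:ℕ) ≤ k then Y j ω else 0))
            = ∑ jj ∈ Finset.range n, (if jj ≤ k then B (u (jj+1)) ω - B (u jj) ω else 0) :=
          Fin.sum_univ_eq_sum_range (fun jj => if jj ≤ k then B (u (jj+1)) ω - B (u jj) ω else 0) n
        have h3 : (∑ jj ∈ Finset.range n, (if jj ≤ k then B (u (jj+1)) ω - B (u jj) ω else 0))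
            = ∑ jj ∈ Finset.range (k+1), (B (u (jj+1)) ω - B (u jj) ω) := by
          have hkn : k < n := lt_of_le_of_lt hk hi
          rw [← Finset.sum_filter]
          congr 1
          ext jj
          simp only [Finset.mem_filter, Finset.mem_range]
          omega
        have h4 : (∑ jj ∈ Finset.range (k+1), (B (u (jj+1)) ω - B (u jj) ω))
            = B (u (k+1)) ω - B (u 0) ω := Finset.sum_range_sub (fun m => B (u m) ω) (k+1)
        rw [h1, h2, h3, h4]
      have hps_eval : ∀ k, k ≤ i → ∀ ω,
          ps k (fun j : S => Y (j:Fin n) ω) = G k ω := by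
        intro k hk ω
        show (∑ j ∈ S.attach, if ((j:Fin n):ℕ) ≤ k then Y (j:Fin n) ω else 0) = G k ω
        rw [Finset.sum_attach S (fun jj : Fin n => if (jj:ℕ) ≤ k then Y jj ω else 0)]
        exact hchain k hk ω
      -- the indicator set on (S → ℝ)
      set Mset : Set (S → ℝ) :=
        {z | a ≤ ps i z} ∩ ⋂ j ∈ Finset.range i, {z | ps j z < a} with hMdef
      have hMmeas : MeasurableSet Mset :=
        (measurableSet_le measurable_const (hpsm i)).inter
          (MeasurableSet.biInter (Finset.range i).countable_toSet
            (fun j _ => measurableSet_lt (hpsm j) measurable_const))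
      set F : (S → ℝ) → ℝ := Mset.indicator (fun z => rexp (lam * ps i z)) with hFdef
      have hFmeas : Measurable F :=
        Measurable.indicator ((measurable_const.mul (hpsm i)).exp) hMmeas
      set Gf : (T → ℝ) → ℝ := fun y => rexp (lam * ∑ j ∈ T.attach, y j) with hGfdef
      have hGfmeas : Measurable Gf :=
        (measurable_const.mul (Finset.measurable_sum _ (fun j _ => measurable_pi_apply j))).exp
      have hcomp := hbase.comp hFmeas hGfmeas
      have hFeq : (F ∘ (fun ω (j : S) => Y (j:Fin n) ω)) = I := by
        funext ω
        simp only [Function.comp_apply]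
        have hmem : ((fun j : S => Y (j:Fin n) ω) ∈ Mset) ↔ ω ∈ C i := by
          rw [hMdef, hCmem i ω]
          simp only [Set.mem_inter_iff, Set.mem_setOf_eq, Set.mem_iInter, Finset.mem_range]
          constructor
          · rintro ⟨hh1, hh2⟩
            rw [hps_eval i le_rfl ω] at hh1
            exact ⟨hh1, fun j hj => by
              have := hh2 j hj; rwa [hps_eval j (le_of_lt hj) ω] at this⟩
          · rintro ⟨hh1, hh2⟩
            rw [← hps_eval i le_rfl ω] at hh1
            exact ⟨hh1, fun j hj => by
              have := hh2 j hj; rwa [← hps_eval j (le_of_lt hj) ω] at this⟩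
        by_cases hω : ω ∈ C i
        · rw [hFdef, Set.indicator_of_mem (hmem.mpr hω), hIdef, Set.indicator_of_mem hω,
            hps_eval i le_rfl ω]
        · rw [hFdef, Set.indicator_of_notMem (fun hc => hω (hmem.mp hc)), hIdef,
            Set.indicator_of_notMem hω]
      have hGeq : (Gf ∘ (fun ω (j : T) => Y (j:Fin n) ω)) = Δ := by
        funext ω
        simp only [Function.comp_apply, hGfdef, hΔdef]
        congr 1
        have hattach : (∑ j ∈ T.attach, Y ((j:Fin n)) ω) = ∑ j ∈ T, Y j ω :=
          Finset.sum_attach T (fun jj : Fin n => Y jj ω)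
        have hsplit := Finset.sum_filter_add_sum_filter_not Finset.univ
          (fun j : Fin n => (j:ℕ) ≤ i) (fun j => Y j ω)
        have hTalt : Finset.filter (fun j : Fin n => ¬ ((j:ℕ) ≤ i)) Finset.univ = T := by
          rw [hTdef]
          ext jj
          simp only [Finset.mem_filter, Finset.mem_univ, true_and]
          omega
        have hSsum : (∑ j ∈ S, Y j ω) = B (u (i+1)) ω - B (u 0) ω := by
          have h0' : (∑ j ∈ S, if (j:ℕ) ≤ i then Y j ω else 0) = ∑ j ∈ S, Y j ω := by
            refine Finset.sum_congr rfl ?_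
            intro j hj
            simp only [hSdef, Finset.mem_filter, Finset.mem_univ, true_and] at hj
            rw [if_pos hj]
          rw [← h0']
          exact hchain i le_rfl ω
        have huniv : (∑ j : Fin n, Y j ω) = B (u n) ω - B (u 0) ω := by
          rw [Fin.sum_univ_eq_sum_range (fun jj => B (u (jj+1)) ω - B (u jj) ω) n]
          exact Finset.sum_range_sub (fun m => B (u m) ω) n
        rw [hTalt] at hsplit
        rw [hattach]
        have : (∑ j ∈ T, Y j ω) = B (u n) ω - B (u (i+1)) ω := by
          have hS' : Finset.filter (fun j : Fin n => (j:ℕ) ≤ i) Finset.univ = S := hSdef.symm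
          rw [hS'] at hsplit
          rw [hSsum, huniv] at hsplit
          linarith
        rw [this]
      rw [hFeq, hGeq] at hcomp
      exact hcomp
    -- step 2 using independence
    have hstep2 : ∫ ω in C i, rexp (lam * G i ω) ∂P
        ≤ ∫ ω in C i, rexp (lam * G (n-1) ω) ∂P := by
      have hprod : ∫ ω, I ω * Δ ω ∂P = (∫ ω, I ω ∂P) * (∫ ω, Δ ω ∂P) :=
        hIndep.integral_fun_mul_eq_mul_integral hIint.aestronglyMeasurable hΔint.aestronglyMeasurable
      have heq : ∀ ω, I ω * Δ ω = (C i).indicator (fun ω' => rexp (lam * G (n-1) ω')) ω := by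
        intro ω
        by_cases hω : ω ∈ C i
        · rw [hIdef]
          simp only [Set.indicator_of_mem hω, hΔdef]
          rw [← Real.exp_add]
          congr 1
          have hnn : n - 1 + 1 = n := Nat.succ_pred_eq_of_pos hn
          show lam * (B (u (i+1)) ω - B (u 0) ω) + lam * (B (u n) ω - B (u (i+1)) ω)
            = lam * (B (u (n-1+1)) ω - B (u 0) ω)
          rw [hnn]; ring
        · simp [hIdef, Set.indicator_of_notMem hω]
      calc ∫ ω in C i, rexp (lam * G i ω) ∂P
          = ∫ ω, I ω ∂P := (integral_indicator (hCmeas i)).symm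
        _ ≤ (∫ ω, I ω ∂P) * (∫ ω, Δ ω ∂P) := le_mul_of_one_le_right hInonneg hΔ1
        _ = ∫ ω, I ω * Δ ω ∂P := hprod.symm
        _ = ∫ ω, (C i).indicator (fun ω' => rexp (lam * G (n-1) ω')) ω ∂P := by
            simp_rw [heq]
        _ = ∫ ω in C i, rexp (lam * G (n-1) ω) ∂P := integral_indicator (hCmeas i)
    exact hstep1.trans hstep2
  -- total bound
  have htotal : ∫ ω, rexp (lam * G (n-1) ω) ∂P ≤ rexp (lam^2 * t / 2) := by
    have hval : ∫ ω, rexp (lam * G (n-1) ω) ∂P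
        = rexp (lam^2 * (u (n-1+1) - u 0) / 2) :=
      hB.integral_exp_incr (hupos 0) (hu (Nat.zero_le _)) lam
    rw [hval]
    have hnn : n - 1 + 1 = n := Nat.succ_pred_eq_of_pos hn
    refine Real.exp_le_exp.2 ?_
    rw [hnn, h0]
    have hun : u n ≤ t := ht n le_rfl
    have : (0:ℝ) ≤ lam^2 := sq_nonneg lam
    nlinarith
  -- assemble
  set A : Set Ω := ⋃ i ∈ Finset.range n, C i with hAdef
  have hPA : P {ω | ∃ j, 1 ≤ j ∧ j ≤ n ∧ a ≤ B (u j) ω} = P A := by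
    refine (measure_congr ?_)
    rw [hunion]
    rw [Filter.eventuallyEq_set]
    filter_upwards [hB.init] with ω hω
    have hB0 : B (u 0) ω = 0 := by rw [h0]; exact hω
    constructor
    · rintro ⟨j, hj1, hjn, hja⟩
      refine ⟨j-1, by omega, ?_⟩
      show a ≤ B (u (j-1+1)) ω - B (u 0) ω
      rw [hB0]
      have : j - 1 + 1 = j := by omega
      rw [this]
      linarith
    · rintro ⟨i, hilt, hai⟩
      have : a ≤ B (u (i+1)) ω - B (u 0) ω := hai
      rw [hB0] at this
      exact ⟨i+1, by omega, by omega, by linarith⟩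
  have hsum : (P A).toReal = ∑ i ∈ Finset.range n, (P (C i)).toReal := by
    rw [hAdef, measure_biUnion_finset hdisj (fun i _ => hCmeas i)]
    exact ENNReal.toReal_sum (fun i _ => measure_ne_top P _)
  have hchain2 : rexp (lam * a) * (P A).toReal ≤ rexp (lam^2 * t / 2) := by
    rw [hsum, Finset.mul_sum]
    calc (∑ i ∈ Finset.range n, rexp (lam*a) * (P (C i)).toReal)
        ≤ ∑ i ∈ Finset.range n, ∫ ω in C i, rexp (lam * G (n-1) ω) ∂P :=
          Finset.sum_le_sum (fun i hi => key i (Finset.mem_range.1 hi))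
      _ = ∫ ω in A, rexp (lam * G (n-1) ω) ∂P := by
          rw [hAdef, integral_biUnion_finset _ (fun i _ => hCmeas i) hdisj
            (fun i _ => hGn_int.integrableOn)]
      _ ≤ ∫ ω, rexp (lam * G (n-1) ω) ∂P :=
          setIntegral_le_integral hGn_int (ae_of_all _ (fun ω => (Real.exp_pos _).le))
      _ ≤ rexp (lam^2 * t / 2) := htotal
  rw [hPA]
  have hPAne : P A ≠ ⊤ := measure_ne_top P A
  have hfinal : (P A).toReal ≤ rexp (-(lam*a) + lam^2*t/2) := by
    rw [Real.exp_add, Real.exp_neg]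
    rw [inv_mul_eq_div, le_div_iff₀ (Real.exp_pos _)]
    calc (P A).toReal * rexp (lam * a)
        = rexp (lam * a) * (P A).toReal := by ring
      _ ≤ rexp (lam^2 * t / 2) := hchain2
  calc P A = ENNReal.ofReal ((P A).toReal) := (ENNReal.ofReal_toReal hPAne).symm
    _ ≤ ENNReal.ofReal (rexp (-(lam*a) + lam^2*t/2)) := ENNReal.ofReal_le_ofReal hfinal

lemma tail_bound (hB : IsBrownianMotion P B) (t a lam : ℝ) (ht : 0 < t) (ha : 0 < a)
    (hl : 0 < lam) :
    P {ω | ∃ q : ℚ, 0 ≤ (q:ℝ) ∧ (q:ℝ) ≤ t ∧ a ≤ B q ω}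
      ≤ ENNReal.ofReal (rexp (-(lam*a) + lam^2*t/2)) := by
  classical
  set e : ℕ → ℚ := fun k => (Denumerable.eqv ℚ).symm k with hedef
  have hesurj : Function.Surjective e := (Denumerable.eqv ℚ).symm.surjective
  set Sq : ℚ → Set Ω := fun q => {ω | 0 ≤ (q:ℝ) ∧ (q:ℝ) ≤ t ∧ a ≤ B q ω} with hSq
  set AN : ℕ → Set Ω := fun N => ⋃ k ∈ Finset.range N, Sq (e k) with hAN
  have hE : {ω | ∃ q : ℚ, 0 ≤ (q:ℝ) ∧ (q:ℝ) ≤ t ∧ a ≤ B q ω} = ⋃ N : ℕ, AN N := by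
    ext ω
    simp only [hAN, Set.mem_setOf_eq, Set.mem_iUnion, Finset.mem_range]
    constructor
    · rintro ⟨q, h⟩
      obtain ⟨k, rfl⟩ := hesurj q
      exact ⟨k+1, k, Nat.lt_succ_self k, h⟩
    · rintro ⟨N, k, _, h⟩
      exact ⟨e k, h⟩
  have hmono : Monotone AN := by
    intro N M hNM
    simp only [hAN]
    intro ω hω
    simp only [Set.mem_iUnion, Finset.mem_range] at hω ⊢
    obtain ⟨k, hk, hmem⟩ := hω
    exact ⟨k, lt_of_lt_of_le hk hNM, hmem⟩
  rw [hE, hmono.directed_le.measure_iUnion]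
  refine iSup_le ?_
  intro N
  -- the finite grid
  set F : Finset ℚ :=
    ((Finset.range N).image e).filter (fun q => 0 ≤ (q:ℝ) ∧ (q:ℝ) ≤ t) with hF
  set l : List ℚ := F.sort (· ≤ ·) with hl'
  set m : ℕ := l.length with hm
  have hsort : l.Pairwise (· ≤ ·) := Finset.pairwise_sort _ _
  have hmemF : ∀ q ∈ F, 0 ≤ (q:ℝ) ∧ (q:ℝ) ≤ t := by
    intro q hq
    rw [hF, Finset.mem_filter] at hq
    exact hq.2
  have hmeml : ∀ q ∈ l, q ∈ F := fun q hq => (Finset.mem_sort (· ≤ ·)).1 hq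
  set u : ℕ → ℝ := fun j => Nat.rec 0 (fun j' uj => max uj ((l.getD j' 0 : ℚ) : ℝ)) j with hu'
  have husucc : ∀ j, u (j+1) = max (u j) ((l.getD j 0 : ℚ) : ℝ) := fun j => rfl
  have hu0 : u 0 = 0 := rfl
  have humono : Monotone u := monotone_nat_of_le_succ (fun j => by rw [husucc]; exact le_max_left _ _)
  have hgetD_mem : ∀ j, j < m → (l.getD j 0) ∈ F := by
    intro j hj
    rw [List.getD_eq_getElem l 0 hj]
    exact hmeml _ (List.getElem_mem hj)
  have hut : ∀ j, u j ≤ t := by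
    intro j
    induction j with
    | zero => exact ht.le
    | succ j ih =>
      rw [husucc]
      refine max_le ih ?_
      by_cases hj : j < m
      · exact (hmemF _ (hgetD_mem j hj)).2
      · rw [List.getD_eq_default l 0 (by omega)]
        exact_mod_cast ht.le
  have hval : ∀ j, j < m → u (j+1) = ((l.getD j 0 : ℚ) : ℝ) := by
    intro j hj
    induction j with
    | zero =>
      rw [husucc, hu0]
      exact max_eq_right (by exact_mod_cast (hmemF _ (hgetD_mem 0 hj)).1)
    | succ j ih =>
      have hjm : j < m := by omega
      rw [husucc (j+1), ih hjm]
      refine max_eq_right ?_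
      have := hsort.rel_get_of_lt (a := ⟨j, hjm⟩) (b := ⟨j+1, hj⟩) (by simp [Fin.lt_def])
      rw [List.getD_eq_getElem l 0 hjm, List.getD_eq_getElem l 0 hj]
      exact_mod_cast this
  have hev : AN N = {ω | ∃ j, 1 ≤ j ∧ j ≤ m ∧ a ≤ B (u j) ω} := by
    ext ω
    simp only [hAN, Set.mem_iUnion, Finset.mem_range, Set.mem_setOf_eq]
    constructor
    · rintro ⟨k, hkN, hmem⟩
      rw [hSq] at hmem
      obtain ⟨hq0, hqt, hqa⟩ := hmem
      have hqF : e k ∈ F := by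
        rw [hF, Finset.mem_filter]
        exact ⟨Finset.mem_image.2 ⟨k, Finset.mem_range.2 hkN, rfl⟩, hq0, hqt⟩
      have hqL : e k ∈ l := (Finset.mem_sort (· ≤ ·)).2 hqF
      obtain ⟨j, hj, hjq⟩ := List.mem_iff_getElem.1 hqL
      refine ⟨j+1, by omega, by omega, ?_⟩
      rw [hval j hj, List.getD_eq_getElem l 0 hj, hjq]
      exact hqa
    · rintro ⟨j, hj1, hjm, hja⟩
      have hjm' : j - 1 < m := by omega
      have hju : u j = ((l.getD (j-1) 0 : ℚ) : ℝ) := by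
        have := hval (j-1) hjm'
        rwa [Nat.sub_add_cancel hj1] at this
      set q : ℚ := l.getD (j-1) 0 with hq
      have hqF : q ∈ F := hgetD_mem _ hjm'
      have : q ∈ (Finset.range N).image e := by
        rw [hF, Finset.mem_filter] at hqF
        exact hqF.1
      obtain ⟨k, hk, hkq⟩ := Finset.mem_image.1 this
      refine ⟨k, Finset.mem_range.1 hk, ?_⟩
      rw [hSq, hkq]
      refine ⟨(hmemF q hqF).1, (hmemF q hqF).2, ?_⟩
      rw [← hju] at *
      rwa [hju] at hja
  rw [hev]
  exact doob_grid hB m u humono hu0 t a lam (fun j _ => hut j) ha hl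
end BM

set_option maxHeartbeats 1000000 in
/-- For `0 < ε < 1/2`, `E[exp(ε (α⁺)²)] < ∞`, where `α = B_{U T_1}/√T_1`. -/
theorem brownian_alpha_plus_exp_square_finite {Ω : Type*} [MeasurableSpace Ω] (P : Measure Ω)
    (B : ℝ → Ω → ℝ) (hB : IsBrownianMotion P B) (U : Ω → ℝ) (hUm : Measurable U)
    (hU : P.map U = volume.restrict (Set.Icc (0:ℝ) 1))
    (hindep : IndepFun U (fun ω => fun t => B t ω) P)
    (ε : ℝ) (hε0 : 0 < ε) (hε : ε < 1 / 2) :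
    (∫⁻ ω, ENNReal.ofReal (Real.exp (ε *
        (max (B (U ω * hitTime B 1 ω) ω / Real.sqrt (hitTime B 1 ω)) 0) ^ 2)) ∂P) < ⊤ := by

  haveI := hB.isProb
  classical
  -- constants
  set a : ℝ := Real.sqrt (ε + 1/2) with hadef
  have ha2 : a^2 = ε + 1/2 := Real.sq_sqrt (by linarith)
  have ha0 : 0 < a := Real.sqrt_pos.2 (by linarith)
  have ha1 : a < 1 := by nlinarith
  set r : ℝ := (1 + (ε + 1/2)/(2*ε))/2 with hrdef
  have hx1 : 1 < (ε + 1/2)/(2*ε) := by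
    rw [lt_div_iff₀ (by linarith)]
    linarith
  have hr1 : 1 < r := by rw [hrdef]; linarith
  have hrpos : 0 < r := by linarith
  set β : ℝ := a^2/2 - ε*r with hβdef
  have hβpos : 0 < β := by
    rw [hβdef, ha2, hrdef]
    have h2ε : (0:ℝ) < 2*ε := by linarith
    have key : ε * ((1 + (ε + 1/2)/(2*ε))/2) = ε/2 + (ε + 1/2)/4 := by
      field_simp
      ring
    rw [key]
    linarith
  -- a.s. U ∈ [0,1]
  have hU01 : ∀ᵐ ω ∂P, U ω ∈ Set.Icc (0:ℝ) 1 := by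
    rw [ae_iff]
    have hpre : {ω | ¬ U ω ∈ Set.Icc (0:ℝ) 1} = U ⁻¹' (Set.Icc (0:ℝ) 1)ᶜ := rfl
    rw [hpre, ← Measure.map_apply hUm measurableSet_Icc.compl, hU,
      Measure.restrict_apply measurableSet_Icc.compl]
    simp
  -- tail events
  set D : ℕ → Set Ω := fun k => {ω | ∃ q : ℚ, 0 ≤ (q:ℝ) ∧ (q:ℝ) ≤ r⁻¹^k ∧ a ≤ B q ω}
    with hDdef
  have hDmeas : ∀ k, MeasurableSet (D k) := by
    intro k
    have : D k = ⋃ q : ℚ, {ω | 0 ≤ (q:ℝ) ∧ (q:ℝ) ≤ r⁻¹^k ∧ a ≤ B q ω} := by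
      ext ω; simp [hDdef, Set.mem_iUnion]
    rw [this]
    refine MeasurableSet.iUnion (fun q => ?_)
    by_cases hc : (0:ℝ) ≤ (q:ℝ) ∧ (q:ℝ) ≤ r⁻¹^k
    · have hset : {ω : Ω | 0 ≤ (q:ℝ) ∧ (q:ℝ) ≤ r⁻¹^k ∧ a ≤ B q ω} = {ω | a ≤ B q ω} := by
        ext ω
        simp only [Set.mem_setOf_eq]
        exact ⟨fun h => h.2.2, fun h => ⟨hc.1, hc.2, h⟩⟩
      rw [hset]
      exact measurableSet_le measurable_const (hB.meas _)
    · have hset : {ω : Ω | 0 ≤ (q:ℝ) ∧ (q:ℝ) ≤ r⁻¹^k ∧ a ≤ B q ω} = ∅ := by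
        ext ω
        simp only [Set.mem_setOf_eq, Set.mem_empty_iff_false, iff_false]
        intro h
        exact hc ⟨h.1, h.2.1⟩
      rw [hset]
      exact MeasurableSet.empty
  have hDbound : ∀ k : ℕ, P (D k) ≤ ENNReal.ofReal (rexp (-(a^2/2) * r^k)) := by
    intro k
    have htk : (0:ℝ) < r⁻¹^k := pow_pos (by positivity) k
    have hlamk : (0:ℝ) < a * r^k := by positivity
    have := tail_bound hB (r⁻¹^k) a (a * r^k) htk ha0 hlamk
    refine le_trans this (le_of_eq ?_)
    congr 1
    have hrne : r ≠ 0 := ne_of_gt hrpos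
    rw [inv_pow]
    field_simp
    ring
  -- the dominating function
  set H : Ω → ℝ≥0∞ := fun ω => ENNReal.ofReal (rexp (ε*r)) +
    ∑' k : ℕ, (D (k+1)).indicator (fun _ => ENNReal.ofReal (rexp (ε * r^(k+2)))) ω with hHdef
  -- pointwise bound
  have hpt : ∀ᵐ ω ∂P, ENNReal.ofReal (Real.exp (ε *
      (max (B (U ω * hitTime B 1 ω) ω / Real.sqrt (hitTime B 1 ω)) 0) ^ 2)) ≤ H ω := by
    filter_upwards [hB.init, hB.cont, hU01] with ω hB0 hcont hUω
    set T : ℝ := hitTime B 1 ω with hTdef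
    have hT0 : 0 ≤ T := Real.sInf_nonneg (fun x hx => hx.1)
    have hfirst : ∀ x : ℝ, x ≤ rexp (ε * r) →
        ENNReal.ofReal x ≤ H ω := by
      intro x hx
      refine le_trans (ENNReal.ofReal_le_ofReal hx) ?_
      rw [hHdef]
      exact le_self_add
    rcases eq_or_lt_of_le hT0 with hTeq | hTpos
    · -- T = 0
      have hsq0 : Real.sqrt T = 0 := by rw [← hTeq, Real.sqrt_zero]
      rw [hsq0, div_zero, max_self]
      refine hfirst _ ?_
      rw [pow_two, mul_zero, mul_zero, Real.exp_zero]
      exact Real.one_le_exp (by positivity)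
    · -- T > 0
      have hTmem : T ∈ {t : ℝ | 0 ≤ t ∧ B t ω = 1} := by
        by_cases hne : {t : ℝ | 0 ≤ t ∧ B t ω = 1}.Nonempty
        · refine IsClosed.csInf_mem ?_ hne ⟨0, fun x hx => hx.1⟩
          have hset : {t : ℝ | 0 ≤ t ∧ B t ω = 1}
              = (Set.Ici 0) ∩ (fun t => B t ω) ⁻¹' {1} := by
            ext s; simp [Set.mem_Ici]
          rw [hset]
          exact isClosed_Ici.inter (isClosed_singleton.preimage hcont)
        · exfalso
          rw [Set.not_nonempty_iff_eq_empty] at hne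
          have : T = 0 := by
            rw [hTdef]
            show sInf {t : ℝ | 0 ≤ t ∧ B t ω = 1} = 0
            rw [hne, Real.sInf_empty]
          linarith
      have hBT : B T ω = 1 := hTmem.2
      have hle1 : ∀ s, 0 ≤ s → s ≤ T → B s ω ≤ 1 := by
        intro s hs0 hsT
        by_contra hgt
        push_neg at hgt
        have hsT' : s < T := by
          rcases eq_or_lt_of_le hsT with h | h
          · rw [h, hBT] at hgt; linarith
          · exact h
        have h1mem : (1:ℝ) ∈ Set.Icc (B 0 ω) (B s ω) := by
          rw [hB0]; exact ⟨by linarith, by linarith⟩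
        obtain ⟨c, hc, hBc⟩ := intermediate_value_Icc hs0 hcont.continuousOn h1mem
        have hcT : T ≤ c := csInf_le ⟨0, fun x hx => hx.1⟩ ⟨hc.1, hBc⟩
        have : c < T := lt_of_le_of_lt hc.2 hsT'
        linarith
      have hUT0 : 0 ≤ U ω * T := mul_nonneg hUω.1 hT0
      have hUTT : U ω * T ≤ T := by nlinarith [hUω.2]
      have hBUT : B (U ω * T) ω ≤ 1 := hle1 _ hUT0 hUTT
      have hsqpos : 0 < Real.sqrt T := Real.sqrt_pos.2 hTpos
      have halpha : max (B (U ω * T) ω / Real.sqrt T) 0 ≤ 1 / Real.sqrt T := by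
        refine max_le ?_ (by positivity)
        exact div_le_div_of_nonneg_right hBUT hsqpos.le
      have halpha2 : (max (B (U ω * T) ω / Real.sqrt T) 0)^2 ≤ 1 / T := by
        have h1 : (max (B (U ω * T) ω / Real.sqrt T) 0)^2 ≤ (1 / Real.sqrt T)^2 :=
          pow_le_pow_left₀ (le_max_right _ _) halpha 2
        rwa [div_pow, one_pow, Real.sq_sqrt hT0] at h1
      have hexpT : rexp (ε * (max (B (U ω * T) ω / Real.sqrt T) 0)^2)
          ≤ rexp (ε * (1/T)) :=
        Real.exp_le_exp.2 (mul_le_mul_of_nonneg_left halpha2 hε0.le)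
      by_cases hTr : r⁻¹ ≤ T
      · refine hfirst _ (hexpT.trans (Real.exp_le_exp.2
          (mul_le_mul_of_nonneg_left ?_ hε0.le)))
        rw [div_le_iff₀ hTpos]
        calc (1:ℝ) = r * r⁻¹ := by field_simp
          _ ≤ r * T := by
              exact mul_le_mul_of_nonneg_left hTr hrpos.le
      · push_neg at hTr
        have hinv1 : r⁻¹ < 1 := inv_lt_one_of_one_lt₀ hr1
        have hinvpos : (0:ℝ) < r⁻¹ := by positivity
        have hex : ∃ n : ℕ, r⁻¹^n ≤ T := by
          obtain ⟨n, hn⟩ := exists_pow_lt_of_lt_one hTpos hinv1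
          exact ⟨n, hn.le⟩
        have hNspec : r⁻¹^(Nat.find hex) ≤ T := Nat.find_spec hex
        set N : ℕ := Nat.find hex with hNdef
        have hN2 : 2 ≤ N := by
          by_contra hlt
          push_neg at hlt
          interval_cases N
          · rw [pow_zero] at hNspec
            nlinarith
          · rw [pow_one] at hNspec
            linarith
        set k : ℕ := N - 1 with hkdef
        have hk1 : 1 ≤ k := by omega
        have hkN : k + 1 = N := by omega
        have hTlow : r⁻¹^(k+1) ≤ T := by rw [hkN]; exact hNspec
        have hTup : T < r⁻¹^k := by
          have hmin := Nat.find_min hex (m := k) (by omega)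
          push_neg at hmin
          exact hmin
        -- ω ∈ D k
        have hmem : ω ∈ D k := by
          have hconT : ContinuousAt (fun s => B s ω) T := hcont.continuousAt
          rw [Metric.continuousAt_iff] at hconT
          obtain ⟨δ, hδpos, hδ⟩ := hconT (1 - a) (by linarith)
          have hlo : max (T - δ) 0 < T := by
            rcases le_total (T - δ) 0 with h | h
            · rw [max_eq_right h]; linarith
            · rw [max_eq_left h]; linarith
          obtain ⟨q, hq1, hq2⟩ := exists_rat_btwn hlo
          have hq0 : (0:ℝ) ≤ (q:ℝ) := le_of_lt (lt_of_le_of_lt (le_max_right _ _) hq1)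
          have hqδ : dist ((q:ℝ)) T < δ := by
            rw [Real.dist_eq, abs_sub_lt_iff]
            constructor
            · linarith
            · have : T - δ ≤ max (T - δ) 0 := le_max_left _ _
              linarith
          have hBq : a ≤ B q ω := by
            have := hδ hqδ
            rw [Real.dist_eq, abs_sub_lt_iff] at this
            have h2 := this.2
            rw [hBT] at h2
            linarith
          exact ⟨q, hq0, by linarith, hBq⟩
        -- conclude
        have h1T : 1/T ≤ r^(k+1) := by
          rw [div_le_iff₀ hTpos]
          calc (1:ℝ) = r^(k+1) * r⁻¹^(k+1) := by
                rw [inv_pow]; field_simp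
            _ ≤ r^(k+1) * T :=
                mul_le_mul_of_nonneg_left hTlow (by positivity)
        have hexp2 : rexp (ε * (max (B (U ω * T) ω / Real.sqrt T) 0)^2)
            ≤ rexp (ε * r^(k+1)) :=
          hexpT.trans (Real.exp_le_exp.2 (mul_le_mul_of_nonneg_left h1T hε0.le))
        refine le_trans (ENNReal.ofReal_le_ofReal hexp2) ?_
        rw [hHdef]
        refine le_trans ?_ le_add_self
        have hterm := ENNReal.le_tsum (f := fun k' : ℕ =>
          (D (k'+1)).indicator (fun _ => ENNReal.ofReal (rexp (ε * r^(k'+2)))) ω) (k-1)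
        refine le_trans ?_ hterm
        have hkk : k - 1 + 1 = k := by omega
        have hkk2 : k - 1 + 2 = k + 1 := by omega
        rw [hkk, hkk2, Set.indicator_of_mem hmem]
  -- integrate
  have hmono := lintegral_mono_ae hpt
  refine lt_of_le_of_lt hmono ?_
  have hgmeas : Measurable (fun ω => ∑' k : ℕ,
      (D (k+1)).indicator (fun _ => ENNReal.ofReal (rexp (ε * r^(k+2)))) ω) :=
    Measurable.ennreal_tsum (fun k => measurable_const.indicator (hDmeas (k+1)))
  have hsplit : ∫⁻ ω, H ω ∂P = ENNReal.ofReal (rexp (ε*r)) +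
      ∑' k : ℕ, ENNReal.ofReal (rexp (ε * r^(k+2))) * P (D (k+1)) := by
    rw [hHdef]
    rw [lintegral_add_left measurable_const]
    rw [lintegral_const]
    rw [measure_univ, mul_one]
    congr 1
    rw [lintegral_tsum (fun k => (measurable_const.indicator (hDmeas (k+1))).aemeasurable)]
    congr 1
    funext k
    exact lintegral_indicator_const (hDmeas (k+1)) _
  rw [hsplit]
  refine ENNReal.add_lt_top.2 ⟨ENNReal.ofReal_lt_top, ?_⟩
  -- bound the series
  set qq : ℝ := rexp (-(β*(r-1))) with hqqdef
  have hqq0 : 0 ≤ qq := (Real.exp_pos _).le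
  have hqq1 : qq < 1 := by
    rw [hqqdef, Real.exp_lt_one_iff]
    nlinarith
  have hsummable : Summable (fun k : ℕ => rexp (-β) * qq^k) :=
    (summable_geometric_of_lt_one hqq0 hqq1).mul_left _
  have hterms : ∀ k : ℕ, ENNReal.ofReal (rexp (ε * r^(k+2))) * P (D (k+1))
      ≤ ENNReal.ofReal (rexp (-β) * qq^k) := by
    intro k
    refine le_trans (mul_le_mul_right (hDbound (k+1)) _) ?_
    rw [← ENNReal.ofReal_mul (Real.exp_pos _).le, ← Real.exp_add]
    refine ENNReal.ofReal_le_ofReal ?_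
    -- rexp (ε * r^(k+2) + -(a^2/2) * r^(k+1)) ≤ rexp(-β) * qq^k
    rw [hqqdef, ← Real.exp_nat_mul, ← Real.exp_add]
    refine Real.exp_le_exp.2 ?_
    have hpow : ε * r^(k+2) + -(a^2/2) * r^(k+1) = -β * r^(k+1) := by
      rw [hβdef]; ring
    rw [hpow]
    have hbern : 1 + (k+1 : ℕ) * (r-1) ≤ r^(k+1) := by
      have := one_add_mul_le_pow (a := r - 1) (by linarith) (k+1)
      have h11 : 1 + (r - 1) = r := by ring
      rwa [h11] at this
    have hk1 : (1:ℝ) + k * (r-1) ≤ r^(k+1) := by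
      push_cast at hbern ⊢
      nlinarith
    nlinarith [hβpos, hk1]
  calc (∑' k : ℕ, ENNReal.ofReal (rexp (ε * r^(k+2))) * P (D (k+1)))
      ≤ ∑' k : ℕ, ENNReal.ofReal (rexp (-β) * qq^k) := ENNReal.tsum_le_tsum hterms
    _ = ENNReal.ofReal (∑' k : ℕ, rexp (-β) * qq^k) :=
        (ENNReal.ofReal_tsum_of_nonneg (fun k => by positivity) hsummable).symm
    _ < ⊤ := ENNReal.ofReal_lt_top
end

section
/- For all a > 0, b > 0 and m ≥ 0, the integral L(a,b,m) = ∫_0^∞ y^m (1/(a+y)^{m+1} − 1/(b+y)^{m+1}) dy converges and equals log(b/a). -/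
open MeasureTheory Filter Set

open intervalIntegral

lemma gcont {m : ℝ} (hm : 0 ≤ m) :
    ContinuousOn (fun u : ℝ => u ^ m / (1 - u)) (Ico 0 1) := by
  apply ContinuousOn.div
  · exact fun u hu => (Real.continuousAt_rpow_const u m (Or.inr hm)).continuousWithinAt
  · fun_prop
  · intro u hu h
    have : u < 1 := hu.2
    nlinarith [sub_eq_zero.mp h]

lemma hcont {m : ℝ} (hm : 0 ≤ m) :
    ContinuousOn (fun u : ℝ => (u ^ m - 1) / (1 - u)) (Ico 0 1) := by
  apply ContinuousOn.div
  · exact ContinuousOn.sub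
      (fun u hu => (Real.continuousAt_rpow_const u m (Or.inr hm)).continuousWithinAt)
      continuousOn_const
  · fun_prop
  · intro u hu h
    have : u < 1 := hu.2
    nlinarith [sub_eq_zero.mp h]

lemma hbound {m : ℝ} (hm : 0 ≤ m) {u : ℝ} (hu : u ∈ Ico (0:ℝ) 1) :
    |(u ^ m - 1) / (1 - u)| ≤ max m 1 := by
  obtain ⟨hu0, hu1⟩ := hu
  have hle : u ^ m ≤ 1 := Real.rpow_le_one hu0 hu1.le hm
  have h1u : (0:ℝ) < 1 - u := by linarith
  have key : 1 - u ^ m ≤ max m 1 * (1 - u) := by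
    rcases le_total m 1 with hm1 | hm1
    · have : u ^ (1:ℝ) ≤ u ^ m := Real.rpow_le_rpow_of_exponent_ge' hu0 hu1.le hm hm1
      rw [Real.rpow_one] at this
      have h1 : (1:ℝ) ≤ max m 1 := le_max_right m 1
      nlinarith
    · have hs : (-1:ℝ) ≤ u - 1 := by linarith
      have := one_add_mul_self_le_rpow_one_add hs hm1
      have h1 : (1 + (u - 1)) = u := by ring
      rw [h1] at this
      have h2 : m ≤ max m 1 := le_max_left m 1
      nlinarith
  rw [abs_div, abs_of_nonpos (by linarith), abs_of_pos h1u, div_le_iff₀ h1u]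
  linarith

lemma L_subst {c m n : ℝ} (hc : 0 < c) (hm : 0 ≤ m) (hn : 0 ≤ n) :
    (∫ y in (0:ℝ)..n, y ^ m / (c + y) ^ (m + 1))
      = ∫ u in (0:ℝ)..(n / (c + n)), u ^ m / (1 - u) := by
  have huIcc : uIcc (0:ℝ) n = Icc 0 n := uIcc_of_le hn
  have hderiv : ∀ y ∈ uIcc (0:ℝ) n,
      HasDerivAt (fun y : ℝ => y / (c + y)) (c / ((c + y) * (c + y))) y := by
    intro y hy
    rw [huIcc] at hy
    have hcy : (0:ℝ) < c + y := by linarith [hy.1]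
    have h := (hasDerivAt_id y).div ((hasDerivAt_const y c).add (hasDerivAt_id y)) hcy.ne'
    simp only [id, one_mul, zero_add, mul_one] at h
    have e : (c + y - y) / (c + y) ^ 2 = c / ((c + y) * (c + y)) := by
      rw [sq]; congr 1; ring
    have h' : HasDerivAt (fun y : ℝ => y / (c + y)) ((c + y - y) / (c + y) ^ 2) y := h
    rwa [e] at h'
  have hcont' : ContinuousOn (fun y : ℝ => c / ((c + y) * (c + y))) (uIcc (0:ℝ) n) := by
    rw [huIcc]
    apply ContinuousOn.div continuousOn_const (by fun_prop)
    intro y hy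
    have hcy : (0:ℝ) < c + y := by linarith [hy.1]
    exact ne_of_gt (mul_pos hcy hcy)
  have himg : (fun y : ℝ => y / (c + y)) '' uIcc (0:ℝ) n ⊆ Ico 0 1 := by
    rw [huIcc]
    rintro _ ⟨y, hy, rfl⟩
    have hcy : (0:ℝ) < c + y := by linarith [hy.1]
    constructor
    · exact div_nonneg hy.1 hcy.le
    · rw [div_lt_one hcy]; linarith [hy.1]
  have key := integral_comp_smul_deriv' hderiv hcont' ((gcont hm).mono himg)
  have h0 : (0:ℝ) / (c + 0) = 0 := by simp
  rw [h0] at key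
  rw [← key]
  apply intervalIntegral.integral_congr
  intro y hy
  rw [huIcc] at hy
  have hy0 : (0:ℝ) ≤ y := hy.1
  have hcy : (0:ℝ) < c + y := by linarith
  have h1 : (1:ℝ) - y / (c + y) = c / (c + y) := by field_simp; ring
  simp only [Function.comp, smul_eq_mul]
  rw [h1, Real.div_rpow hy0 hcy.le, Real.rpow_add_one hcy.ne']
  have hP : (c + y) ^ m ≠ 0 := (Real.rpow_pos_of_pos hcy m).ne'
  field_simp

lemma L_intg {c m : ℝ} (hc : 0 < c) (hm : 0 ≤ m) {n : ℝ} (hn : 0 ≤ n) :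
    IntervalIntegrable (fun y : ℝ => y ^ m / (c + y) ^ (m + 1)) volume 0 n := by
  apply ContinuousOn.intervalIntegrable
  rw [uIcc_of_le hn]
  apply ContinuousOn.div
  · exact fun y hy => (Real.continuousAt_rpow_const y m (Or.inr hm)).continuousWithinAt
  · intro y hy
    have hcy : (0:ℝ) < c + y := by linarith [hy.1]
    exact ((Real.continuousAt_rpow_const (c + y) (m + 1) (Or.inl hcy.ne')).comp
      ((continuous_const.add continuous_id).continuousAt)).continuousWithinAt
  · intro y hy
    have hcy : (0:ℝ) < c + y := by linarith [hy.1]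
    exact (Real.rpow_pos_of_pos hcy _).ne'

/-- `∫_0^∞ y^m (1/(a+y)^{m+1} − 1/(b+y)^{m+1}) dy`, understood as the limit of the integrals
over `(0, n)` as `n → ∞`, converges to `log(b/a)`. -/
theorem L_integral_eq_log {a b m : ℝ} (ha : 0 < a) (hb : 0 < b) (hm : 0 ≤ m) :
    Tendsto (fun n : ℝ => ∫ y in (0:ℝ)..n,
        y ^ m * (1 / (a + y) ^ (m + 1) - 1 / (b + y) ^ (m + 1)))
      atTop (nhds (Real.log (b / a))) := by
  set ca : ℝ → ℝ := fun n => n / (a + n) with hca_def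
  set cb : ℝ → ℝ := fun n => n / (b + n) with hcb_def
  -- membership facts
  have hmem : ∀ (c : ℝ), 0 < c → ∀ n : ℝ, 0 ≤ n → n / (c + n) ∈ Ico (0:ℝ) 1 := by
    intro c hc n hn
    have hcn : (0:ℝ) < c + n := by linarith
    exact ⟨div_nonneg hn hcn.le, by rw [div_lt_one hcn]; linarith⟩
  -- the eventual identity
  have hId : ∀ᶠ n in atTop, (∫ y in (0:ℝ)..n,
        y ^ m * (1 / (a + y) ^ (m + 1) - 1 / (b + y) ^ (m + 1)))
      = (∫ u in cb n..ca n, (u ^ m - 1) / (1 - u))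
        + (Real.log (1 - cb n) - Real.log (1 - ca n)) := by
    filter_upwards [eventually_ge_atTop (0:ℝ)] with n hn
    have hcan : ca n ∈ Ico (0:ℝ) 1 := hmem a ha n hn
    have hcbn : cb n ∈ Ico (0:ℝ) 1 := hmem b hb n hn
    have huIcc : uIcc (cb n) (ca n) ⊆ Ico (0:ℝ) 1 :=
      Set.OrdConnected.uIcc_subset Set.ordConnected_Ico hcbn hcan
    have step1 : (∫ y in (0:ℝ)..n,
          y ^ m * (1 / (a + y) ^ (m + 1) - 1 / (b + y) ^ (m + 1)))
        = (∫ y in (0:ℝ)..n, y ^ m / (a + y) ^ (m + 1))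
          - ∫ y in (0:ℝ)..n, y ^ m / (b + y) ^ (m + 1) := by
      rw [← intervalIntegral.integral_sub (L_intg ha hm hn) (L_intg hb hm hn)]
      apply intervalIntegral.integral_congr
      intro y _
      ring
    have intg0 : ∀ d ∈ Ico (0:ℝ) 1,
        IntervalIntegrable (fun u : ℝ => u ^ m / (1 - u)) volume 0 d := by
      intro d hd
      apply ContinuousOn.intervalIntegrable
      apply (gcont hm).mono
      rw [uIcc_of_le hd.1]
      exact Icc_subset_Ico_right hd.2
    have step3 : (∫ u in (0:ℝ)..ca n, u ^ m / (1 - u))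
          - (∫ u in (0:ℝ)..cb n, u ^ m / (1 - u))
        = ∫ u in cb n..ca n, u ^ m / (1 - u) :=
      intervalIntegral.integral_interval_sub_left (intg0 _ hcan) (intg0 _ hcbn)
    have hinv_int : IntervalIntegrable (fun u : ℝ => (1 - u)⁻¹) volume (cb n) (ca n) := by
      apply ContinuousOn.intervalIntegrable
      apply ContinuousOn.mono _ huIcc
      apply ContinuousOn.inv₀ (by fun_prop)
      intro u hu h
      have : u < 1 := hu.2
      nlinarith [sub_eq_zero.mp h]
    have hh_int : IntervalIntegrable (fun u : ℝ => (u ^ m - 1) / (1 - u)) volume (cb n) (ca n) :=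
      ContinuousOn.intervalIntegrable (((hcont hm)).mono huIcc)
    have step4 : (∫ u in cb n..ca n, u ^ m / (1 - u))
        = (∫ u in cb n..ca n, (u ^ m - 1) / (1 - u)) + ∫ u in cb n..ca n, (1 - u)⁻¹ := by
      rw [← intervalIntegral.integral_add hh_int hinv_int]
      apply intervalIntegral.integral_congr
      intro u hu
      have hu1 : u < 1 := (huIcc hu).2
      have : (1:ℝ) - u ≠ 0 := by intro h; nlinarith [sub_eq_zero.mp h]
      field_simp
      ring
    have step5 : (∫ u in cb n..ca n, (1 - u)⁻¹)
        = Real.log (1 - cb n) - Real.log (1 - ca n) := by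
      have hFTC := intervalIntegral.integral_eq_sub_of_hasDerivAt
        (f := fun u : ℝ => -Real.log (1 - u)) (f' := fun u : ℝ => (1 - u)⁻¹)
        (a := cb n) (b := ca n) ?_ hinv_int
      · rw [hFTC]; ring
      · intro u hu
        have hu1 : u < 1 := (huIcc hu).2
        have h1u : (1:ℝ) - u ≠ 0 := by intro h; nlinarith [sub_eq_zero.mp h]
        have hd : HasDerivAt (fun u : ℝ => (1:ℝ) - u) (-1) u := (hasDerivAt_id u).const_sub 1
        have := ((Real.hasDerivAt_log h1u).comp u hd).neg
        convert this using 1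
        · rfl
        · ring
    rw [step1, L_subst ha hm hn, L_subst hb hm hn, step3, step4, step5]
  -- limits of ca, cb
  have hdiv : ∀ (c : ℝ), 0 < c → Tendsto (fun n : ℝ => c / (c + n)) atTop (nhds 0) := by
    intro c hc
    exact Tendsto.div_atTop tendsto_const_nhds (tendsto_atTop_add_const_left _ c tendsto_id)
  have hlim : ∀ (c : ℝ), 0 < c → Tendsto (fun n : ℝ => n / (c + n)) atTop (nhds 1) := by
    intro c hc
    have h1 : Tendsto (fun n : ℝ => 1 - c / (c + n)) atTop (nhds (1 - 0)) :=
      tendsto_const_nhds.sub (hdiv c hc)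
    rw [sub_zero] at h1
    apply h1.congr'
    filter_upwards [eventually_ge_atTop (0:ℝ)] with n hn
    have hcn : (0:ℝ) < c + n := by linarith
    field_simp
    ring
  -- error term tends to 0
  have hE : Tendsto (fun n : ℝ => ∫ u in cb n..ca n, (u ^ m - 1) / (1 - u)) atTop (nhds 0) := by
    refine squeeze_zero_norm' (a := fun n => max m 1 * |ca n - cb n|) ?_ ?_
    · filter_upwards [eventually_ge_atTop (0:ℝ)] with n hn
      have hcan : ca n ∈ Ico (0:ℝ) 1 := hmem a ha n hn
      have hcbn : cb n ∈ Ico (0:ℝ) 1 := hmem b hb n hn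
      have huIcc : uIcc (cb n) (ca n) ⊆ Ico (0:ℝ) 1 :=
        Set.OrdConnected.uIcc_subset Set.ordConnected_Ico hcbn hcan
      apply intervalIntegral.norm_integral_le_of_norm_le_const
      intro u hu
      exact hbound hm (huIcc (uIoc_subset_uIcc hu))
    · have : Tendsto (fun n : ℝ => max m 1 * |ca n - cb n|) atTop
          (nhds (max m 1 * |1 - 1|)) :=
        (((hlim a ha).sub (hlim b hb)).abs).const_mul _
      simpa using this
  -- log term tends to log (b/a)
  have hlog : Tendsto (fun n : ℝ => Real.log (1 - cb n) - Real.log (1 - ca n)) atTop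
      (nhds (Real.log (b / a))) := by
    have hr : Tendsto (fun n : ℝ => (a + n) / (b + n)) atTop (nhds 1) := by
      have h1 : Tendsto (fun n : ℝ => 1 + (a - b) / (b + n)) atTop (nhds (1 + 0)) := by
        apply tendsto_const_nhds.add
        exact Tendsto.div_atTop tendsto_const_nhds (tendsto_atTop_add_const_left _ b tendsto_id)
      rw [add_zero] at h1
      apply h1.congr'
      filter_upwards [eventually_ge_atTop (0:ℝ)] with n hn
      have hbn : (0:ℝ) < b + n := by linarith
      field_simp
      ring
    have hlogr : Tendsto (fun n : ℝ => Real.log ((a + n) / (b + n))) atTop (nhds 0) := by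
      have := ((Real.continuousAt_log one_ne_zero).tendsto).comp hr
      simpa [Function.comp_def] using this
    have h2 : Tendsto (fun n : ℝ => Real.log (b / a) + Real.log ((a + n) / (b + n))) atTop
        (nhds (Real.log (b / a) + 0)) := tendsto_const_nhds.add hlogr
    rw [add_zero] at h2
    apply h2.congr'
    filter_upwards [eventually_ge_atTop (0:ℝ)] with n hn
    have han : (0:ℝ) < a + n := by linarith
    have hbn : (0:ℝ) < b + n := by linarith
    have e1 : (1:ℝ) - cb n = b / (b + n) := by rw [hcb_def]; field_simp; ring
    have e2 : (1:ℝ) - ca n = a / (a + n) := by rw [hca_def]; field_simp; ring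
    rw [e1, e2, Real.log_div hb.ne' hbn.ne', Real.log_div ha.ne' han.ne',
      Real.log_div hb.ne' ha.ne', Real.log_div han.ne' hbn.ne']
    ring
  have := hE.add hlog
  rw [zero_add] at this
  exact this.congr' (hId.mono fun n h => h.symm)
end

section
/- For every C ≥ 1, ∫_0^C (y log y)/(1+y) dy = C log C − C − (log C) log(C+1) + π²/6 + (log C)²/2 + Li₂(−1/C), where Li₂(x) = Σ_{n≥1} xⁿ/n² is the dilogarithm function. -/
open MeasureTheory Filter Set

/-- The dilogarithm `Li₂(x) = Σ_{n ≥ 1} xⁿ/n²`. -/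
noncomputable def Li2 (x : ℝ) : ℝ := ∑' n : ℕ, x ^ (n + 1) / ((n : ℝ) + 1) ^ 2

open Real Topology

lemma hasSum_inv_sq : HasSum (fun n : ℕ => 1 / ((n : ℝ) + 1) ^ 2) (π ^ 2 / 6) := by
  have h := (hasSum_nat_add_iff' (f := fun n : ℕ => (1 : ℝ) / (n : ℝ) ^ 2) 1).2 hasSum_zeta_two
  simpa using h

lemma li2_summable {x : ℝ} (h : |x| ≤ 1) :
    Summable (fun n : ℕ => x ^ (n + 1) / ((n : ℝ) + 1) ^ 2) := by
  refine Summable.of_norm_bounded hasSum_inv_sq.summable (fun n => ?_)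
  have h1 : (0:ℝ) < ((n:ℝ)+1)^2 := by positivity
  rw [norm_div, norm_pow, Real.norm_eq_abs, Real.norm_eq_abs, abs_of_pos h1]
  gcongr
  exact pow_le_one₀ (abs_nonneg x) h

lemma li2_hasSum {x : ℝ} (h : |x| ≤ 1) :
    HasSum (fun n : ℕ => x ^ (n + 1) / ((n : ℝ) + 1) ^ 2) (Li2 x) :=
  (li2_summable h).hasSum

lemma li2_zero : Li2 0 = 0 := by
  simp [Li2]

lemma li2_neg_one : Li2 (-1) = -(π ^ 2) / 12 := by
  set f : ℕ → ℝ := fun n => 1 / ((n:ℝ)+1)^2 with hf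
  have hfS : HasSum f (π ^ 2 / 6) := hasSum_inv_sq
  have hodd : HasSum (fun k : ℕ => f (2*k+1)) (π ^ 2 / 24) := by
    have h := hfS.mul_left (1/4)
    have heq : (fun k : ℕ => (1/4:ℝ) * f k) = fun k : ℕ => f (2*k+1) := by
      funext k
      simp only [hf]
      push_cast
      have hk : ((k:ℝ)+1) ≠ 0 := by positivity
      have hk2 : (2*(k:ℝ)+1+1) ≠ 0 := by positivity
      field_simp
      ring
    rw [heq] at h
    have hval : (1/4:ℝ) * (π ^ 2 / 6) = π ^ 2 / 24 := by ring
    rwa [hval] at h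
  have hevensum : Summable (fun k : ℕ => f (2*k)) := by
    refine Summable.of_nonneg_of_le (fun k => by positivity) (fun k => ?_) hfS.summable
    simp only [hf]
    refine one_div_le_one_div_of_le (by positivity) ?_
    push_cast
    nlinarith [Nat.cast_nonneg (α := ℝ) k]
  obtain ⟨E, hevenS⟩ := hevensum
  have htot : HasSum f (E + π ^ 2 / 24) := HasSum.even_add_odd hevenS hodd
  have hEval : E = π ^ 2 / 8 := by
    have := htot.unique hfS
    linarith
  set g : ℕ → ℝ := fun n => (-1:ℝ) ^ (n+1) / ((n:ℝ)+1)^2 with hg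
  have hgeven : HasSum (fun k : ℕ => g (2*k)) (-(π^2/8)) := by
    have h := hevenS.neg
    rw [hEval] at h
    have heq : (fun k : ℕ => -f (2*k)) = fun k : ℕ => g (2*k) := by
      funext k
      have hpow : ((-1:ℝ)) ^ (2*k+1) = -1 := by
        rw [pow_succ, pow_mul]; norm_num
      simp only [hf, hg]
      rw [hpow, neg_div]
    rwa [heq] at h
  have hgodd : HasSum (fun k : ℕ => g (2*k+1)) (π ^ 2 / 24) := by
    have heq : (fun k : ℕ => f (2*k+1)) = fun k : ℕ => g (2*k+1) := by
      funext k
      have hpow : ((-1:ℝ)) ^ (2*k+1+1) = 1 := by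
        rw [show 2*k+1+1 = 2*(k+1) by ring, pow_mul]; norm_num
      simp only [hf, hg]
      rw [hpow]
    rwa [heq] at hodd
  have halt : HasSum g (-(π^2/8) + π^2/24) := HasSum.even_add_odd hgeven hgodd
  have : Li2 (-1) = ∑' n, g n := rfl
  rw [this, halt.tsum_eq]
  ring

lemma li2_continuousOn : ContinuousOn Li2 (Icc (-1:ℝ) 1) := by
  have hu : TendstoUniformlyOn
      (fun (t : Finset ℕ) (x : ℝ) => ∑ n ∈ t, x ^ (n + 1) / ((n : ℝ) + 1) ^ 2)
      (fun x => ∑' n : ℕ, x ^ (n + 1) / ((n : ℝ) + 1) ^ 2) atTop (Icc (-1:ℝ) 1) := by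
    refine tendstoUniformlyOn_tsum hasSum_inv_sq.summable (fun n x hx => ?_)
    have hx1 : |x| ≤ 1 := abs_le.2 ⟨hx.1, hx.2⟩
    have h1 : (0:ℝ) < ((n:ℝ)+1)^2 := by positivity
    rw [norm_div, norm_pow, Real.norm_eq_abs, Real.norm_eq_abs, abs_of_pos h1]
    gcongr
    exact pow_le_one₀ (abs_nonneg x) hx1
  exact hu.continuousOn (Filter.Eventually.of_forall fun t =>
    (Continuous.continuousOn (continuous_finset_sum _ (fun n _ => by fun_prop)))).frequently

lemma li2_hasDerivAt {x : ℝ} (h : |x| < 1) (hx : x ≠ 0) :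
    HasDerivAt Li2 (-Real.log (1 - x) / x) x := by
  set r : ℝ := (1 + |x|) / 2 with hr
  have hx_abs : 0 ≤ |x| := abs_nonneg x
  have hr1 : r < 1 := by rw [hr]; linarith
  have hr0 : 0 < r := by rw [hr]; linarith
  have hxr : |x| < r := by rw [hr]; linarith
  have key : HasDerivAt (fun z : ℝ => ∑' n : ℕ, z ^ (n + 1) / ((n : ℝ) + 1) ^ 2)
      (∑' n : ℕ, x ^ n / ((n : ℝ) + 1)) x := by
    refine hasDerivAt_tsum_of_isPreconnected
      (t := Set.Ioo (-r) r) (u := fun n : ℕ => r ^ n)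
      (summable_geometric_of_lt_one hr0.le hr1)
      isOpen_Ioo isPreconnected_Ioo
      (g' := fun n y => y ^ n / ((n : ℝ) + 1))
      (fun n y _ => ?_) (fun n y hy => ?_) (y₀ := 0) ?_ ?_ ?_
    · have h1 : HasDerivAt (fun z : ℝ => z ^ (n + 1)) ((n + 1 : ℕ) * y ^ n) y := by
        simpa using hasDerivAt_pow (n + 1) y
      have := h1.div_const (((n : ℝ) + 1) ^ 2)
      refine this.congr_deriv ?_
      have hne : ((n:ℝ)+1) ≠ 0 := by positivity
      push_cast
      field_simp
      try ring
    · have hy' : |y| ≤ r := by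
        rw [abs_le]; exact ⟨hy.1.le, hy.2.le⟩
      rw [norm_div, norm_pow, Real.norm_eq_abs, Real.norm_eq_abs]
      have h1 : (0:ℝ) < (n:ℝ) + 1 := by positivity
      rw [abs_of_pos h1]
      calc |y| ^ n / ((n:ℝ)+1) ≤ |y| ^ n :=
            div_le_self (by positivity) (by linarith [Nat.cast_nonneg (α := ℝ) n])
        _ ≤ r ^ n := pow_le_pow_left₀ (abs_nonneg y) hy' n
    · exact Set.mem_Ioo.2 ⟨by linarith, hr0⟩
    · refine Summable.of_nonneg_of_le (fun n => by positivity) (fun n => ?_) hasSum_inv_sq.summable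
      simp [zero_pow (Nat.succ_ne_zero n)]
      try positivity
    · exact Set.mem_Ioo.2 (abs_lt.1 hxr)
  have hsum : HasSum (fun n : ℕ => x ^ n / ((n : ℝ) + 1)) (-Real.log (1-x) / x) := by
    have hs := (hasSum_pow_div_log_of_abs_lt_one h).mul_left x⁻¹
    have heq : (fun n : ℕ => x⁻¹ * (x ^ (n+1) / ((n:ℝ) + 1)))
        = fun n : ℕ => x ^ n / ((n : ℝ) + 1) := by
      funext n
      rw [pow_succ]
      field_simp
      try ring
    rw [heq] at hs
    rw [show -Real.log (1-x) / x = x⁻¹ * -Real.log (1-x) by ring]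
    exact hs
  rw [hsum.tsum_eq] at key
  exact key

lemma li2_tendsto_neg_one_aux {g : ℝ → ℝ} {l : Filter ℝ}
    (hg : Tendsto g l (𝓝 (-1))) (hmem : ∀ᶠ y in l, g y ∈ Icc (-1:ℝ) 1) :
    Tendsto (fun y => Li2 (g y)) l (𝓝 (Li2 (-1))) := by
  have hc : ContinuousWithinAt Li2 (Icc (-1:ℝ) 1) (-1) :=
    li2_continuousOn _ (by constructor <;> norm_num)
  exact hc.tendsto.comp (tendsto_nhdsWithin_iff.2 ⟨hg, hmem⟩)

/-- Antiderivative on (0,1). -/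
noncomputable def F (y : ℝ) : ℝ :=
  y * Real.log y - y - Real.log y * Real.log (1 + y) - Li2 (-y)

/-- Antiderivative on (1,∞). -/
noncomputable def G (y : ℝ) : ℝ :=
  y * Real.log y - y - Real.log y * Real.log (1 + y) + (Real.log y) ^ 2 / 2 + Li2 (-1 / y)

lemma F_hasDerivAt {y : ℝ} (h0 : 0 < y) (h1 : y < 1) :
    HasDerivAt F (y * Real.log y / (1 + y)) y := by
  have hy : y ≠ 0 := h0.ne'
  have h1y : (0:ℝ) < 1 + y := by linarith
  have hA : HasDerivAt (fun y : ℝ => y * Real.log y - y) (Real.log y) y := by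
    have := (Real.hasDerivAt_mul_log hy).sub (hasDerivAt_id y)
    simp at this; exact this
  have hlog : HasDerivAt Real.log y⁻¹ y := Real.hasDerivAt_log hy
  have hlog1 : HasDerivAt (fun y : ℝ => Real.log (1 + y)) (1 + y)⁻¹ y := by
    have h := (Real.hasDerivAt_log h1y.ne').comp y ((hasDerivAt_id y).const_add 1)
    simp at h; exact h
  have hB : HasDerivAt (fun y : ℝ => Real.log y * Real.log (1 + y))
      (y⁻¹ * Real.log (1 + y) + Real.log y * (1 + y)⁻¹) y := hlog.mul hlog1
  have hLi : HasDerivAt (fun y : ℝ => Li2 (-y)) (Real.log (1 + y) / y * (-1) * (-1) * (-1)) y := by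
    have habs : |(-y)| < 1 := by rw [abs_neg, abs_of_pos h0]; exact h1
    have h := (li2_hasDerivAt habs (by simpa using hy)).comp y (hasDerivAt_neg y)
    refine h.congr_deriv ?_
    rw [show (1 : ℝ) - -y = 1 + y by ring]
    field_simp
  have := (hA.sub hB).sub hLi
  refine this.congr_deriv ?_
  field_simp
  ring

lemma G_hasDerivAt {y : ℝ} (h1 : 1 < y) :
    HasDerivAt G (y * Real.log y / (1 + y)) y := by
  have h0 : 0 < y := by linarith
  have hy : y ≠ 0 := h0.ne'
  have h1y : (0:ℝ) < 1 + y := by linarith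
  have hA : HasDerivAt (fun y : ℝ => y * Real.log y - y) (Real.log y) y := by
    have := (Real.hasDerivAt_mul_log hy).sub (hasDerivAt_id y)
    simp at this; exact this
  have hlog : HasDerivAt Real.log y⁻¹ y := Real.hasDerivAt_log hy
  have hlog1 : HasDerivAt (fun y : ℝ => Real.log (1 + y)) (1 + y)⁻¹ y := by
    have h := (Real.hasDerivAt_log h1y.ne').comp y ((hasDerivAt_id y).const_add 1)
    simp at h; exact h
  have hB : HasDerivAt (fun y : ℝ => Real.log y * Real.log (1 + y))
      (y⁻¹ * Real.log (1 + y) + Real.log y * (1 + y)⁻¹) y := hlog.mul hlog1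
  have hSq : HasDerivAt (fun y : ℝ => (Real.log y) ^ 2 / 2) (Real.log y * y⁻¹) y := by
    have := ((hlog.pow 2).div_const 2)
    refine this.congr_deriv ?_
    push_cast
    ring
  have hinner : HasDerivAt (fun y : ℝ => -1 / y) (1 / y ^ 2) y := by
    have h := (hasDerivAt_inv hy).neg
    have heq : (fun y : ℝ => -1 / y) = fun y : ℝ => -(y⁻¹) := by
      funext z; rw [neg_div, one_div]
    rw [heq]
    refine h.congr_deriv ?_
    rw [neg_neg, one_div]
  have hLi : HasDerivAt (fun y : ℝ => Li2 (-1 / y))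
      ((Real.log (1 + y) - Real.log y) / y) y := by
    have habs : |(-1 / y)| < 1 := by
      rw [abs_div, abs_neg, abs_one, abs_of_pos h0]
      rw [div_lt_one h0]; exact h1
    have hne : (-1 / y : ℝ) ≠ 0 := by
      simp [div_eq_zero_iff, hy]
    have h := (li2_hasDerivAt habs hne).comp y hinner
    have h1my : (1 : ℝ) - -1 / y = (1 + y) / y := by field_simp; ring
    refine h.congr_deriv ?_
    rw [h1my, Real.log_div h1y.ne' hy]
    field_simp
  have := ((hA.sub hB).add hSq).add hLi
  refine this.congr_deriv ?_
  field_simp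
  ring

lemma integrable_piece1 :
    IntervalIntegrable (fun y => y * Real.log y / (1 + y)) volume 0 1 := by
  rw [intervalIntegrable_iff_integrableOn_Ioc_of_le zero_le_one]
  refine Measure.integrableOn_of_bounded (M := 1) (by simp) ?_ ?_
  · refine (Measurable.aestronglyMeasurable ?_)
    exact ((measurable_id.mul Real.measurable_log).div (measurable_const.add measurable_id))
  · refine (ae_restrict_iff' measurableSet_Ioc).2 (Filter.Eventually.of_forall fun y hy => ?_)
    obtain ⟨hy0, hy1⟩ := hy
    have h1y : (1:ℝ) ≤ 1 + y := by linarith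
    have hlogle : -Real.log y ≤ 1/y - 1 := by
      have := Real.log_le_sub_one_of_pos (x := 1/y) (by positivity)
      rwa [Real.log_div one_ne_zero hy0.ne', Real.log_one, zero_sub] at this
    have hlogy : Real.log y ≤ 0 := Real.log_nonpos hy0.le hy1
    rw [Real.norm_eq_abs, abs_div, abs_mul, abs_of_pos hy0,
      abs_of_pos (by linarith : (0:ℝ) < 1 + y), abs_of_nonpos hlogy]
    rw [div_le_one (by linarith)]
    have : y * -Real.log y ≤ y * (1/y - 1) := by
      apply mul_le_mul_of_nonneg_left hlogle hy0.le
    have h2 : y * (1/y - 1) = 1 - y := by field_simp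
    nlinarith
lemma integrable_piece2 {C : ℝ} (hC : 1 ≤ C) :
    IntervalIntegrable (fun y => y * Real.log y / (1 + y)) volume 1 C := by
  apply ContinuousOn.intervalIntegrable
  have huIcc : uIcc (1:ℝ) C = Icc 1 C := uIcc_of_le hC
  rw [huIcc]
  intro y hy
  have h0 : (0:ℝ) < y := lt_of_lt_of_le one_pos hy.1
  exact ((continuousAt_id.mul (Real.continuousAt_log h0.ne')).div
    (continuousAt_const.add continuousAt_id) (ne_of_gt (by simpa using (by linarith [hy.1] : (0:ℝ) < 1 + y)))).continuousWithinAt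

lemma integral_piece1 :
    ∫ y in (0:ℝ)..1, y * Real.log y / (1 + y) = -1 + π ^ 2 / 12 := by
  have hF0 : Tendsto F (𝓝[>] (0:ℝ)) (𝓝 0) := by
    have h1 : Tendsto (fun y : ℝ => y * Real.log y) (𝓝[>] 0) (𝓝 0) := by
      have := Real.continuous_mul_log.tendsto 0
      simp only [zero_mul] at this
      exact this.mono_left nhdsWithin_le_nhds
    have hslope : Tendsto (fun y : ℝ => Real.log (1 + y) / y) (𝓝[>] 0) (𝓝 1) := by
      have hd : HasDerivAt (fun y : ℝ => Real.log (1 + y)) 1 0 := by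
        have h := (Real.hasDerivAt_log (by norm_num : (1:ℝ) + id 0 ≠ 0)).comp 0 ((hasDerivAt_id (0:ℝ)).const_add 1)
        simp at h; exact h
      have := hd.hasDerivWithinAt (s := Set.Ioi (0:ℝ))
      rw [hasDerivWithinAt_iff_tendsto_slope] at this
      have hsub : 𝓝[>] (0:ℝ) ≤ 𝓝[Set.Ioi 0 \ {0}] 0 := by
        apply nhdsWithin_mono
        intro x hx
        exact ⟨hx, ne_of_gt hx⟩
      refine (this.mono_left hsub).congr' ?_
      filter_upwards [self_mem_nhdsWithin] with y hy
      have hy0 : y ≠ 0 := ne_of_gt hy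
      simp [slope, hy0, Real.log_one]
      rw [div_eq_inv_mul]
    have h2 : Tendsto (fun y : ℝ => Real.log y * Real.log (1 + y)) (𝓝[>] 0) (𝓝 0) := by
      have := h1.mul hslope
      simp only [zero_mul] at this
      refine this.congr' ?_
      filter_upwards [self_mem_nhdsWithin] with y hy
      have hy0 : y ≠ 0 := ne_of_gt hy
      field_simp
    have h3 : Tendsto (fun y : ℝ => Li2 (-y)) (𝓝[>] 0) (𝓝 0) := by
      have hc : ContinuousWithinAt Li2 (Icc (-1:ℝ) 1) 0 :=
        li2_continuousOn _ (by constructor <;> norm_num)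
      have hg : Tendsto (fun y : ℝ => -y) (𝓝[>] (0:ℝ)) (𝓝 0) := by
        have := (continuous_neg.tendsto (0:ℝ)).mono_left (nhdsWithin_le_nhds (s := Set.Ioi 0))
        simpa using this
      have hmem : ∀ᶠ y in 𝓝[>] (0:ℝ), -y ∈ Icc (-1:ℝ) 1 := by
        filter_upwards [Ioo_mem_nhdsGT_of_mem (by norm_num : (0:ℝ) ∈ Ico (0:ℝ) 1)] with y hy
        constructor <;> [linarith [hy.2]; linarith [hy.1]]
      have := hc.tendsto.comp (tendsto_nhdsWithin_iff.2 ⟨hg, hmem⟩)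
      rwa [li2_zero] at this
    have htend := ((h1.sub (tendsto_nhdsWithin_of_tendsto_nhds tendsto_id)).sub h2).sub h3
    simp only [sub_zero] at htend
    unfold F
    exact htend
  have hF1 : Tendsto F (𝓝[<] (1:ℝ)) (𝓝 (-1 + π ^ 2 / 12)) := by
    have h1 : Tendsto (fun y : ℝ => y * Real.log y - y - Real.log y * Real.log (1 + y))
        (𝓝[<] 1) (𝓝 (-1)) := by
      have hc : ContinuousAt (fun y : ℝ => y * Real.log y - y - Real.log y * Real.log (1 + y)) 1 := by
        have hl : ContinuousAt Real.log 1 := Real.continuousAt_log one_ne_zero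
        have hl2 : ContinuousAt (fun y : ℝ => Real.log (1 + y)) 1 :=
          (Real.continuousAt_log (by norm_num)).comp (continuousAt_const.add continuousAt_id)
        exact ((continuousAt_id.mul hl).sub continuousAt_id).sub (hl.mul hl2)
      have := hc.tendsto.mono_left (nhdsWithin_le_nhds (s := Set.Iio 1))
      simpa using this
    have h3 : Tendsto (fun y : ℝ => Li2 (-y)) (𝓝[<] (1:ℝ)) (𝓝 (Li2 (-1))) := by
      refine li2_tendsto_neg_one_aux ?_ ?_
      · have := (continuous_neg.tendsto (1:ℝ)).mono_left (nhdsWithin_le_nhds (s := Set.Iio 1))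
        simpa using this
      · filter_upwards [Ioo_mem_nhdsLT_of_mem (by norm_num : (1:ℝ) ∈ Ioc (0:ℝ) 1)] with y hy
        constructor <;> [linarith [hy.2]; linarith [hy.1]]
    have := h1.sub h3
    rw [li2_neg_one] at this
    unfold F
    convert this using 2
    ring
  have key := intervalIntegral.integral_eq_sub_of_hasDerivAt_of_tendsto
    (f := F) (f' := fun y => y * Real.log y / (1 + y)) zero_lt_one
    (fun x hx => F_hasDerivAt hx.1 hx.2) integrable_piece1 hF0 hF1
  rw [key]; ring

lemma integral_piece2 {C : ℝ} (hC : 1 < C) :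
    ∫ y in (1:ℝ)..C, y * Real.log y / (1 + y) = G C - (-1 - π ^ 2 / 12) := by
  have hG1 : Tendsto G (𝓝[>] (1:ℝ)) (𝓝 (-1 - π ^ 2 / 12)) := by
    have h1 : Tendsto (fun y : ℝ => y * Real.log y - y - Real.log y * Real.log (1 + y)
        + (Real.log y) ^ 2 / 2) (𝓝[>] 1) (𝓝 (-1)) := by
      have hl : ContinuousAt Real.log 1 := Real.continuousAt_log one_ne_zero
      have hl2 : ContinuousAt (fun y : ℝ => Real.log (1 + y)) 1 :=
        (Real.continuousAt_log (by norm_num)).comp (continuousAt_const.add continuousAt_id)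
      have hc : ContinuousAt (fun y : ℝ => y * Real.log y - y - Real.log y * Real.log (1 + y)
          + (Real.log y) ^ 2 / 2) 1 :=
        (((continuousAt_id.mul hl).sub continuousAt_id).sub (hl.mul hl2)).add
          ((hl.pow 2).div_const 2)
      have := hc.tendsto.mono_left (nhdsWithin_le_nhds (s := Set.Ioi 1))
      simpa using this
    have h3 : Tendsto (fun y : ℝ => Li2 (-1 / y)) (𝓝[>] (1:ℝ)) (𝓝 (Li2 (-1))) := by
      refine li2_tendsto_neg_one_aux ?_ ?_
      · have hcont : ContinuousAt (fun y : ℝ => -1 / y) 1 :=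
          continuousAt_const.div continuousAt_id one_ne_zero
        have := hcont.tendsto.mono_left (nhdsWithin_le_nhds (s := Set.Ioi 1))
        simpa using this
      · filter_upwards [self_mem_nhdsWithin] with y hy
        have hy1 : (1:ℝ) < y := hy
        have hy0 : (0:ℝ) < y := by linarith
        constructor
        · rw [neg_div, neg_le_neg_iff, div_le_one hy0]; linarith
        · have : -1 / y < 0 := div_neg_of_neg_of_pos (by norm_num) hy0
          linarith
    have h := h1.add h3
    rw [li2_neg_one] at h
    have hval : (-1 : ℝ) + -(π^2)/12 = -1 - π^2/12 := by ring
    rw [hval] at h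
    unfold G
    exact h
  have hGC : Tendsto G (𝓝[<] C) (𝓝 (G C)) := by
    have h0C : (0:ℝ) < C := by linarith
    have hl : ContinuousAt Real.log C := Real.continuousAt_log h0C.ne'
    have hl2 : ContinuousAt (fun y : ℝ => Real.log (1 + y)) C :=
      (Real.continuousAt_log (by linarith)).comp (continuousAt_const.add continuousAt_id)
    have hLi : ContinuousAt (fun y : ℝ => Li2 (-1 / y)) C := by
      have habs : |(-1 / C)| < 1 := by
        rw [abs_div, abs_neg, abs_one, abs_of_pos h0C, div_lt_one h0C]; exact hC
      have hne : (-1 / C : ℝ) ≠ 0 := by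
        simp [div_eq_zero_iff, h0C.ne']
      exact (li2_hasDerivAt habs hne).continuousAt.comp
        (continuousAt_const.div continuousAt_id h0C.ne')
    have hc : ContinuousAt G C := by
      unfold G
      exact ((((continuousAt_id.mul hl).sub continuousAt_id).sub (hl.mul hl2)).add
        ((hl.pow 2).div_const 2)).add hLi
    exact hc.tendsto.mono_left (nhdsWithin_le_nhds (s := Set.Iio C))
  exact intervalIntegral.integral_eq_sub_of_hasDerivAt_of_tendsto
    (f := G) (f' := fun y => y * Real.log y / (1 + y)) hC
    (fun x hx => G_hasDerivAt hx.1) (integrable_piece2 hC.le) hG1 hGC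

/-- For `C ≥ 1`,
`∫_0^C (y log y)/(1+y) dy
  = C log C − C − (log C) log(C+1) + π²/6 + (log C)²/2 + Li₂(−1/C)`. -/
theorem integral_y_log_div_one_add (C : ℝ) (hC : 1 ≤ C) :
    ∫ y in (0:ℝ)..C, y * Real.log y / (1 + y)
      = C * Real.log C - C - Real.log C * Real.log (C + 1) + Real.pi ^ 2 / 6 +
          (Real.log C) ^ 2 / 2 + Li2 (-1 / C) := by
  rcases eq_or_lt_of_le hC with rfl | hC1
  · rw [integral_piece1]
    rw [show ((-1:ℝ)/1) = -1 by norm_num, li2_neg_one, Real.log_one]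
    ring
  · have hsplit := intervalIntegral.integral_add_adjacent_intervals
      (a := (0:ℝ)) (b := 1) (c := C)
      integrable_piece1 (integrable_piece2 hC1.le)
    rw [← hsplit, integral_piece1, integral_piece2 hC1]
    unfold G
    rw [show (1:ℝ) + C = C + 1 by ring]
    ring
end
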